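/- Let H : ℂ^{m×n} → ℂ^{m×n} be a linear map that is self-adjoint with respect to the complex Frobenius inner product: ⟨H[Y], Z⟩ = ⟨Y, H[Z]⟩ for all Y, Z ∈ ℂ^{m×n}. Let Û ∈ ℂ^{m×k} and V̂ ∈ ℂ^{n×k} satisfy Û*Û = I_k and V̂*V̂ = I_k, and let S : ℝ → ℂ^{k×k} be differentiable on [t0, t1] with S'(t) = −i Û* H[Û S(t) V̂*] V̂. Then with Ŷ(t) = Û S(t) V̂*, the energy E(Ŷ(t)) = ⟨Ŷ(t), H[Ŷ(t)]⟩ is constant on [t0, t1]. -/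

import Mathlib

open Matrix

/-- The complex Frobenius inner product `⟨A, B⟩ = trace(A* B)`. -/
noncomputable def cfrobInner {m n : ℕ} (A B : Matrix (Fin m) (Fin n) ℂ) : ℂ :=
  (Aᴴ * B).trace

lemma cfrobInner_eq_sum {m n : ℕ} (A B : Matrix (Fin m) (Fin n) ℂ) :
    cfrobInner A B = ∑ j, ∑ i, star (A i j) * B i j := by
  simp [cfrobInner, Matrix.trace, Matrix.mul_apply, Matrix.diag, conjTranspose_apply]

lemma cfrobInner_smul_left {m n : ℕ} (c : ℂ) (A B : Matrix (Fin m) (Fin n) ℂ) :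
    cfrobInner (c • A) B = star c * cfrobInner A B := by
  simp [cfrobInner, conjTranspose_smul, Matrix.smul_mul, trace_smul, smul_eq_mul]

lemma cfrobInner_smul_right {m n : ℕ} (c : ℂ) (A B : Matrix (Fin m) (Fin n) ℂ) :
    cfrobInner A (c • B) = c * cfrobInner A B := by
  simp [cfrobInner, Matrix.mul_smul, trace_smul, smul_eq_mul]

lemma entry_hasDerivAt {k m n : ℕ}
    (G : Matrix (Fin k) (Fin k) ℂ →ₗ[ℂ] Matrix (Fin m) (Fin n) ℂ)
    (S : ℝ → Matrix (Fin k) (Fin k) ℂ) (S' : Matrix (Fin k) (Fin k) ℂ) (t : ℝ)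
    (h : ∀ p q, HasDerivAt (fun s => S s p q) (S' p q) t) (i : Fin m) (j : Fin n) :
    HasDerivAt (fun s => G (S s) i j) (G S' i j) t := by
  have repr : ∀ X : Matrix (Fin k) (Fin k) ℂ,
      G X i j = ∑ p, ∑ q, X p q * (G (Matrix.single p q 1) i j) := by
    intro X
    conv_lhs => rw [matrix_eq_sum_single X, map_sum]
    rw [Matrix.sum_apply]
    refine Finset.sum_congr rfl fun p _ => ?_
    rw [map_sum, Matrix.sum_apply]
    refine Finset.sum_congr rfl fun q _ => ?_
    have : Matrix.single p q (X p q) = (X p q) • Matrix.single p q (1 : ℂ) := by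
      rw [smul_single, smul_eq_mul, mul_one]
    rw [this, _root_.map_smul]
    simp [smul_eq_mul]
  have key : (fun s => G (S s) i j)
      = fun s => ∑ p, ∑ q, S s p q * (G (Matrix.single p q 1) i j) :=
    funext fun s => repr (S s)
  rw [key, repr S']
  exact HasDerivAt.fun_sum fun p _ => HasDerivAt.fun_sum fun q _ => (h p q).mul_const _

/-- Core of Theorem 6: the Galerkin S-step of the complex rank-adaptive integrator applied
to the matrix Schrödinger equation `i Ȧ = H[A]` conserves the energy
`E(Ŷ(t)) = ⟨Ŷ(t), H[Ŷ(t)]⟩` exactly. -/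
theorem sStep_schroedinger_energy_conservation
    {m n k : ℕ} {t0 t1 : ℝ}
    (H : Matrix (Fin m) (Fin n) ℂ →ₗ[ℂ] Matrix (Fin m) (Fin n) ℂ)
    (hH : ∀ Y Z, cfrobInner (H Y) Z = cfrobInner Y (H Z))
    (Uhat : Matrix (Fin m) (Fin k) ℂ) (Vhat : Matrix (Fin n) (Fin k) ℂ)
    (hU : Uhatᴴ * Uhat = 1) (hV : Vhatᴴ * Vhat = 1)
    (S : ℝ → Matrix (Fin k) (Fin k) ℂ)
    (hS : ∀ t ∈ Set.Icc t0 t1, ∀ i j,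
      HasDerivAt (fun s => S s i j)
        (((-Complex.I) • (Uhatᴴ * H (Uhat * S t * Vhatᴴ) * Vhat)) i j) t) :
    ∀ t ∈ Set.Icc t0 t1,
      cfrobInner (Uhat * S t * Vhatᴴ) (H (Uhat * S t * Vhatᴴ))
        = cfrobInner (Uhat * S t0 * Vhatᴴ) (H (Uhat * S t0 * Vhatᴴ)) := by
  -- the linear map X ↦ Û X V̂ᴴ
  set L : Matrix (Fin k) (Fin k) ℂ →ₗ[ℂ] Matrix (Fin m) (Fin n) ℂ :=
    { toFun := fun X => Uhat * X * Vhatᴴ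
      map_add' := fun X Y => by simp [Matrix.mul_add, Matrix.add_mul]
      map_smul' := fun c X => by simp [Matrix.mul_smul, Matrix.smul_mul] } with hL
  have hLapp : ∀ X, L X = Uhat * X * Vhatᴴ := fun X => rfl
  have adj1 : ∀ (X : Matrix (Fin k) (Fin k) ℂ) (B : Matrix (Fin m) (Fin n) ℂ),
      cfrobInner (L X) B = cfrobInner X (Uhatᴴ * B * Vhat) := by
    intro X B
    simp only [cfrobInner, hLapp, conjTranspose_mul, conjTranspose_conjTranspose]
    rw [show Vhat * (Xᴴ * Uhatᴴ) * B = Vhat * (Xᴴ * (Uhatᴴ * B)) by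
      simp [Matrix.mul_assoc], Matrix.trace_mul_comm]
    simp [Matrix.mul_assoc]
  have adj2 : ∀ (B : Matrix (Fin m) (Fin n) ℂ) (X : Matrix (Fin k) (Fin k) ℂ),
      cfrobInner B (L X) = cfrobInner (Uhatᴴ * B * Vhat) X := by
    intro B X
    simp only [cfrobInner, hLapp, conjTranspose_mul, conjTranspose_conjTranspose]
    rw [show Bᴴ * (Uhat * X * Vhatᴴ) = (Bᴴ * Uhat * X) * Vhatᴴ by simp [Matrix.mul_assoc],
      Matrix.trace_mul_comm]
    simp [Matrix.mul_assoc]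
  set E : ℝ → ℂ := fun s => cfrobInner (L (S s)) (H (L (S s))) with hE
  have hderiv : ∀ u ∈ Set.Icc t0 t1, HasDerivAt E 0 u := by
    intro u hu
    set P : Matrix (Fin k) (Fin k) ℂ := Uhatᴴ * H (Uhat * S u * Vhatᴴ) * Vhat with hP
    set S' : Matrix (Fin k) (Fin k) ℂ := (-Complex.I) • P with hS'
    have hent : ∀ p q, HasDerivAt (fun s => S s p q) (S' p q) u := hS u hu
    have hY : ∀ i j, HasDerivAt (fun s => L (S s) i j) (L S' i j) u :=
      entry_hasDerivAt L S S' u hent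
    have hG : ∀ i j, HasDerivAt (fun s => (H.comp L) (S s) i j) ((H.comp L) S' i j) u :=
      entry_hasDerivAt (H.comp L) S S' u hent
    have hsum : HasDerivAt E
        (∑ j, ∑ i, (star (L S' i j) * (H.comp L) (S u) i j
          + star (L (S u) i j) * (H.comp L) S' i j)) u := by
      have : E = fun s => ∑ j, ∑ i, star (L (S s) i j) * (H.comp L) (S s) i j := by
        funext s
        show cfrobInner (L (S s)) (H (L (S s)))
          = ∑ j, ∑ i, star (L (S s) i j) * (H.comp L) (S s) i j
        rw [cfrobInner_eq_sum]
        rfl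
      rw [this]
      exact HasDerivAt.fun_sum fun j _ => HasDerivAt.fun_sum fun i _ =>
        ((hY i j).star.mul (hG i j))
    have hD : (∑ j, ∑ i, (star (L S' i j) * (H.comp L) (S u) i j
          + star (L (S u) i j) * (H.comp L) S' i j))
        = cfrobInner (L S') (H (L (S u))) + cfrobInner (L (S u)) (H (L S')) := by
      rw [cfrobInner_eq_sum, cfrobInner_eq_sum, ← Finset.sum_add_distrib]
      refine Finset.sum_congr rfl fun j _ => ?_
      rw [← Finset.sum_add_distrib]
      rfl
    have hzero : cfrobInner (L S') (H (L (S u))) + cfrobInner (L (S u)) (H (L S')) = 0 := by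
      rw [← hH (L (S u)) (L S'), adj1, adj2]
      have h1 : Uhatᴴ * H (L (S u)) * Vhat = P := by rw [hP, hLapp]
      rw [h1, hS', cfrobInner_smul_left, cfrobInner_smul_right]
      simp only [star_neg, Complex.star_def, Complex.conj_I, neg_neg]
      ring
    rw [hD, hzero] at hsum
    exact hsum
  intro t ht
  have ht0 : t0 ∈ Set.Icc t0 t1 := ⟨le_refl _, ht.1.trans ht.2⟩
  have hcont : ContinuousOn E (Set.Icc t0 t1) :=
    fun x hx => ((hderiv x hx).continuousAt).continuousWithinAt
  have := constant_of_has_deriv_right_zero hcont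
    (fun x hx => ((hderiv x (Set.mem_Icc_of_Ico hx)).hasDerivWithinAt)) t ht
  simpa [hE, hLapp] using this
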